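/- arXiv:1104.1961 — 4 statements merged into one kernel-verified Lean document; each statement's English description precedes it below -/
import Mathlib

section
/- For every nonempty finite subset E ⊆ ℕ (of positive integers), there exist a finite abelian group G, an automorphism v of G, and a subgroup H ≤ G such that E = {#(O(h) ∩ H) : h ∈ H, h ≠ 0}, where O(h) denotes the v-orbit of h. -/
/-- An algebraic realization of a set `E ⊆ ℕ` : a finite abelian group `G`,
an automorphism `v` of `G` and a subgroup `H ≤ G` such that
`E = {#(O(h) ∩ H) : 0 ≠ h ∈ H}`, where `O(h) = {vⁱ(h) : i ∈ ℤ}` is the `v`-orbit. -/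
structure AlgRealization (E : Set ℕ) where
  G : Type
  [grp : AddCommGroup G]
  [fin : Fintype G]
  v : AddAut G
  H : AddSubgroup G
  spec : E = {n : ℕ | ∃ h : G, h ∈ H ∧ h ≠ 0 ∧
      Nat.card ((Set.range fun i : ℤ => (i • v) h) ∩ (H : Set G) : Set G) = n}

namespace Stmt3Aux

/-- `dE E n = ∏_{t ∈ E, t < n} t`. -/
def dE (E : Finset ℕ) (n : ℕ) : ℕ := ∏ t ∈ E.filter (· < n), t

lemma dE_pos (E : Finset ℕ) (hpos : ∀ n ∈ E, 0 < n) (n : ℕ) : 0 < dE E n :=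
  Finset.prod_pos fun t ht => hpos t (Finset.mem_filter.1 ht).1

lemma dE_mul (E : Finset ℕ) {n : ℕ} (hn : n ∈ E) :
    dE E n * n = ∏ t ∈ E.filter (· ≤ n), t := by
  have hset : E.filter (· ≤ n) = insert n (E.filter (· < n)) := by
    ext t
    simp only [Finset.mem_filter, Finset.mem_insert]
    constructor
    · rintro ⟨ht, hle⟩
      rcases eq_or_lt_of_le hle with h | h
      · exact Or.inl h
      · exact Or.inr ⟨ht, h⟩
    · rintro (rfl | ⟨ht, hlt⟩)
      · exact ⟨hn, le_rfl⟩
      · exact ⟨ht, le_of_lt hlt⟩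
  rw [hset, Finset.prod_insert (by simp [Finset.mem_filter])]
  rw [mul_comm]
  rfl

lemma dE_mul_dvd_prod (E : Finset ℕ) {n : ℕ} (hn : n ∈ E) :
    dE E n * n ∣ ∏ t ∈ E, t := by
  rw [dE_mul E hn]
  exact Finset.prod_dvd_prod_of_subset _ _ _ (Finset.filter_subset _ _)

lemma dE_mul_dvd_dE (E : Finset ℕ) {n m : ℕ} (hn : n ∈ E) (hlt : n < m) :
    dE E n * n ∣ dE E m := by
  rw [dE_mul E hn]
  exact Finset.prod_dvd_prod_of_subset _ _ _
    (fun t ht => by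
      rw [Finset.mem_filter] at ht ⊢
      exact ⟨ht.1, lt_of_le_of_lt ht.2 hlt⟩)

variable (E : Finset ℕ) {p : ℕ} (ζ : (ZMod p)ˣ)

/-- The eigenvalue for the gadget at `n`. -/
def lam (n : ℕ) : (ZMod p)ˣ := ζ ^ ((∏ t ∈ E, t) / (dE E n * n))

/-- The second eigenvalue for the gadget at `n`. -/
def mu (n : ℕ) : (ZMod p)ˣ := lam E ζ n ^ (n + 1)

/-- The ambient group. -/
abbrev Amb (E : Finset ℕ) (p : ℕ) : Type := {x // x ∈ E} → ZMod p × ZMod p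

/-- The `i`-th power of the automorphism, written explicitly. -/
def act (i : ℤ) (h : Amb E p) : Amb E p :=
  fun j => (((lam E ζ (j : ℕ) ^ i : (ZMod p)ˣ) : ZMod p) * (h j).1,
            ((mu E ζ (j : ℕ) ^ i : (ZMod p)ˣ) : ZMod p) * (h j).2)

lemma act_zero (h : Amb E p) : act E ζ 0 h = h := by
  funext j
  simp [act]

lemma act_act (i i' : ℤ) (h : Amb E p) :
    act E ζ i (act E ζ i' h) = act E ζ (i + i') h := by
  funext j
  simp [act, zpow_add, mul_assoc]

/-- The automorphism `v`. -/
def vA : AddAut (Amb E p) := {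
  toFun := act E ζ 1
  invFun := act E ζ (-1)
  left_inv := fun h => by rw [act_act]; norm_num [act_zero]
  right_inv := fun h => by rw [act_act]; norm_num [act_zero]
  map_add' := fun h h' => by
    funext j
    simp [act, Prod.ext_iff, mul_add] }

lemma vA_apply (h : Amb E p) : vA E ζ h = act E ζ 1 h := rfl

lemma vA_inv_apply (h : Amb E p) : (-(vA E ζ)) h = act E ζ (-1) h := rfl

lemma vA_zpow (i : ℤ) : ∀ h : Amb E p, (i • vA E ζ) h = act E ζ i h := by
  induction i using Int.induction_on with
  | zero => intro h; rw [zero_zsmul, act_zero]; rfl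
  | succ n ih =>
      intro h
      rw [add_one_zsmul, AddAut.add_apply, ih, vA_apply, act_act]
  | pred n ih =>
      intro h
      have : (-(n : ℤ) - 1) = (-(n : ℤ)) + (-1) := by ring
      rw [this, add_zsmul, AddAut.add_apply, ih, neg_one_zsmul, vA_inv_apply, act_act]

/-- The subgroup `H`: the diagonal in each coordinate. -/
def Hsub (E : Finset ℕ) (p : ℕ) : AddSubgroup (Amb E p) where
  carrier := {h | ∀ j : {x // x ∈ E}, (h j).1 = (h j).2}
  add_mem' := fun ha hb j => by
    simp only [Pi.add_apply, Prod.fst_add, Prod.snd_add, ha j, hb j]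
  zero_mem' := fun j => rfl
  neg_mem' := fun ha j => by
    simp only [Pi.neg_apply, Prod.fst_neg, Prod.snd_neg, ha j]

section OrderLemmas

variable [Fact p.Prime] (hpos : ∀ n ∈ E, 0 < n) (hζ : orderOf ζ = ∏ t ∈ E, t)

include hpos hζ

lemma orderOf_lam {n : ℕ} (hn : n ∈ E) : orderOf (lam E ζ n) = dE E n * n := by
  have hd : dE E n * n ∣ ∏ t ∈ E, t := dE_mul_dvd_prod E hn
  have hN0 : 0 < ∏ t ∈ E, t := Finset.prod_pos hpos
  rw [lam, orderOf_pow, hζ]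
  rw [Nat.gcd_eq_right (Nat.div_dvd_of_dvd hd)]
  exact Nat.div_div_self hd hN0.ne'

lemma lam_zpow_eq_one_iff {n : ℕ} (hn : n ∈ E) (i : ℤ) :
    lam E ζ n ^ i = 1 ↔ ((dE E n * n : ℕ) : ℤ) ∣ i := by
  rw [← orderOf_dvd_iff_zpow_eq_one, orderOf_lam E ζ hpos hζ hn]

lemma mu_zpow_eq_lam_zpow {n : ℕ} (hn : n ∈ E) {i : ℤ}
    (hd : ((dE E n : ℕ) : ℤ) ∣ i) : mu E ζ n ^ i = lam E ζ n ^ i := by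
  obtain ⟨c, rfl⟩ := hd
  have h1 : lam E ζ n ^ ((n : ℤ) * ((dE E n : ℕ) * c)) = 1 := by
    rw [lam_zpow_eq_one_iff E ζ hpos hζ hn]
    exact ⟨c, by push_cast; ring⟩
  rw [mu, ← zpow_natCast (lam E ζ n) (n + 1), ← zpow_mul]
  have h2 : ((n : ℤ) + 1) * ((dE E n : ℕ) * c)
      = (n : ℤ) * ((dE E n : ℕ) * c) + (dE E n : ℕ) * c := by push_cast; ring
  rw [Nat.cast_add, Nat.cast_one, h2, zpow_add, h1, one_mul]

lemma lam_zpow_eq_mu_zpow_iff {n : ℕ} (hn : n ∈ E) (i : ℤ) :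
    lam E ζ n ^ i = mu E ζ n ^ i ↔ ((dE E n : ℕ) : ℤ) ∣ i := by
  constructor
  · intro hEq
    have hmu : mu E ζ n ^ i = lam E ζ n ^ ((n : ℤ) * i) * lam E ζ n ^ i := by
      rw [mu, ← zpow_natCast (lam E ζ n) (n + 1), ← zpow_mul, ← zpow_add]
      congr 1
      push_cast
      ring
    rw [hmu] at hEq
    have h1 : lam E ζ n ^ ((n : ℤ) * i) = 1 :=
      mul_right_cancel (b := lam E ζ n ^ i) (by rw [one_mul]; exact hEq.symm)
    rw [lam_zpow_eq_one_iff E ζ hpos hζ hn] at h1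
    have hn0 : (n : ℤ) ≠ 0 := by
      exact_mod_cast (hpos n hn).ne'
    have h2 : (n : ℤ) * (dE E n : ℕ) ∣ (n : ℤ) * i := by
      obtain ⟨c, hc⟩ := h1
      exact ⟨c, by rw [hc]; push_cast; ring⟩
    exact (mul_dvd_mul_iff_left hn0).1 h2
  · intro hd
    exact (mu_zpow_eq_lam_zpow E ζ hpos hζ hn hd).symm

end OrderLemmas

lemma mem_Hsub {h : Amb E p} : h ∈ Hsub E p ↔ ∀ j, (h j).1 = (h j).2 := Iff.rfl

section Count

variable [Fact p.Prime]

lemma count_main (hpos : ∀ n ∈ E, 0 < n) (hζ : orderOf ζ = ∏ t ∈ E, t)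
    (h : Amb E p) (hH : h ∈ Hsub E p) (jm : {x // x ∈ E}) (hjm : h jm ≠ 0)
    (hmax : ∀ j, h j ≠ 0 → (j : ℕ) ≤ (jm : ℕ)) :
    Nat.card (((Set.range fun i : ℤ => act E ζ i h) ∩ (Hsub E p : Set (Amb E p))) : Set (Amb E p))
      = (jm : ℕ) := by
  rw [mem_Hsub] at hH
  set m := (jm : ℕ) with hmdef
  have hm : m ∈ E := jm.2
  have hm0 : 0 < m := hpos m hm
  set d := dE E m with hddef
  have hd0 : 0 < d := dE_pos E hpos m
  have hx : (h jm).1 ≠ 0 := by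
    intro h0
    exact hjm (Prod.ext h0 (by rw [← hH jm]; exact h0))
  -- divisibility facts for supported coordinates
  have fact1 : ∀ j : {x // x ∈ E}, h j ≠ 0 →
      ((dE E (j : ℕ) : ℕ) : ℤ) ∣ (d : ℤ) ∧
      ((dE E (j : ℕ) * (j : ℕ) : ℕ) : ℤ) ∣ ((d * m : ℕ) : ℤ) := by
    intro j hj0
    rcases eq_or_lt_of_le (hmax j hj0) with hEq | hlt
    · constructor
      · rw [hEq]
      · rw [hEq]
    · have h1 : dE E (j : ℕ) * (j : ℕ) ∣ d := dE_mul_dvd_dE E j.2 hlt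
      constructor
      · exact_mod_cast dvd_trans (dvd_mul_right _ _) h1
      · exact_mod_cast dvd_trans h1 (dvd_mul_right d m)
  have mem_H_iff : ∀ i : ℤ, act E ζ i h ∈ Hsub E p ↔ (d : ℤ) ∣ i := by
    intro i
    rw [mem_Hsub]
    constructor
    · intro hi
      have hjm' := hi jm
      simp only [act] at hjm'
      rw [← hH jm] at hjm'
      have hu : lam E ζ m ^ i = mu E ζ m ^ i :=
        Units.ext (mul_right_cancel₀ hx hjm')
      exact (lam_zpow_eq_mu_zpow_iff E ζ hpos hζ hm i).1 hu
    · intro hi j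
      by_cases h0 : (h j).1 = 0
      · have h02 : (h j).2 = 0 := by rw [← hH j]; exact h0
        simp [act, h0, h02]
      · have hj0 : h j ≠ 0 := fun hz => h0 (by rw [hz]; rfl)
        have hdE : ((dE E (j : ℕ) : ℕ) : ℤ) ∣ i := dvd_trans (fact1 j hj0).1 hi
        have hmueq := mu_zpow_eq_lam_zpow E ζ hpos hζ j.2 hdE
        simp [act, hmueq, hH j]
  have act_eq_of : ∀ i i' : ℤ, ((d * m : ℕ) : ℤ) ∣ (i - i') →
      act E ζ i h = act E ζ i' h := by
    intro i i' hdiff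
    funext j
    by_cases h0 : h j = 0
    · have h1 : (h j).1 = 0 := by rw [h0]; rfl
      have h2 : (h j).2 = 0 := by rw [h0]; rfl
      simp [act, h1, h2]
    · have hdd := (fact1 j h0).2
      have hlam : lam E ζ (j : ℕ) ^ (i - i') = 1 := by
        rw [lam_zpow_eq_one_iff E ζ hpos hζ j.2]
        exact dvd_trans hdd hdiff
      have hlam2 : lam E ζ (j : ℕ) ^ i = lam E ζ (j : ℕ) ^ i' := by
        have hii : i = i' + (i - i') := by ring
        rw [hii, zpow_add, hlam, mul_one]
      have hmu1 : mu E ζ (j : ℕ) ^ (i - i') = 1 := by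
        rw [mu, ← zpow_natCast (lam E ζ (j : ℕ)) ((j : ℕ) + 1), ← zpow_mul,
          mul_comm, zpow_mul, hlam, one_zpow]
      have hmu2 : mu E ζ (j : ℕ) ^ i = mu E ζ (j : ℕ) ^ i' := by
        have hii : i = i' + (i - i') := by ring
        rw [hii, zpow_add, hmu1, mul_one]
      simp [act, hlam2, hmu2]
  -- the parametrization of the intersection
  set T : Fin m → Amb E p := fun t => act E ζ ((d : ℤ) * ((t : ℕ) : ℤ)) h with hTdef
  have hzconv : ∀ s : ℕ, lam E ζ m ^ ((d : ℤ) * (s : ℤ)) = (lam E ζ m ^ d) ^ s := by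
    intro s
    rw [← zpow_natCast (lam E ζ m ^ d) s, ← zpow_natCast (lam E ζ m) d, ← zpow_mul]
  have hord : orderOf (lam E ζ m ^ d) = m := by
    rw [orderOf_pow, orderOf_lam E ζ hpos hζ hm,
      Nat.gcd_eq_right (dvd_mul_right d m)]
    exact Nat.mul_div_cancel_left m hd0
  have hTinj : Function.Injective T := by
    intro t t' hEq
    have h1 := congrFun hEq jm
    simp only [hTdef, act] at h1
    have hfst := congrArg Prod.fst h1
    simp only at hfst
    have hu : lam E ζ m ^ ((d : ℤ) * ((t : ℕ) : ℤ)) = lam E ζ m ^ ((d : ℤ) * ((t' : ℕ) : ℤ)) :=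
      Units.ext (mul_right_cancel₀ hx hfst)
    rw [hzconv, hzconv] at hu
    have ht1 : ((t : ℕ) : ℕ) ∈ Set.Iio (orderOf (lam E ζ m ^ d)) := by
      rw [hord]; exact t.2
    have ht2 : ((t' : ℕ) : ℕ) ∈ Set.Iio (orderOf (lam E ζ m ^ d)) := by
      rw [hord]; exact t'.2
    exact Fin.ext (pow_injOn_Iio_orderOf ht1 ht2 hu)
  have hrange : ((Set.range fun i : ℤ => act E ζ i h) ∩ (Hsub E p : Set (Amb E p)))
      = Set.range T := by
    ext x
    constructor
    · rintro ⟨⟨i, rfl⟩, hmem⟩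
      have hdi : (d : ℤ) ∣ i := (mem_H_iff i).1 hmem
      obtain ⟨q, rfl⟩ := hdi
      have hmZ0 : ((m : ℤ)) ≠ 0 := by exact_mod_cast hm0.ne'
      have hmod1 := Int.emod_nonneg q hmZ0
      have hmod2 := Int.emod_lt_of_pos q (show (0 : ℤ) < m by exact_mod_cast hm0)
      refine ⟨⟨(q % (m : ℤ)).toNat, by omega⟩, ?_⟩
      show act E ζ ((d : ℤ) * (((q % (m : ℤ)).toNat : ℕ) : ℤ)) h = act E ζ ((d : ℤ) * q) h
      apply act_eq_of
      rw [Int.toNat_of_nonneg hmod1]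
      refine ⟨-(q / (m : ℤ)), ?_⟩
      rw [Int.emod_def]
      push_cast
      ring
    · rintro ⟨t, rfl⟩
      exact ⟨⟨(d : ℤ) * ((t : ℕ) : ℤ), rfl⟩, (mem_H_iff _).2 ⟨((t : ℕ) : ℤ), rfl⟩⟩
  rw [hrange, Nat.card_range_of_injective hTinj]
  simp

end Count

end Stmt3Aux

theorem stmt3 (E : Finset ℕ) (hne : E.Nonempty) (hpos : ∀ n ∈ E, 0 < n) :
    Nonempty (AlgRealization (↑E : Set ℕ)) := by
  classical
  have hN0 : (∏ t ∈ E, t) ≠ 0 := (Finset.prod_pos hpos).ne'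
  obtain ⟨p, hp, hlt, hmod⟩ := Nat.exists_prime_gt_modEq_one 1 hN0
  haveI : Fact p.Prime := ⟨hp⟩
  have hp1 : 1 ≤ p := hp.one_lt.le
  have hdvd : (∏ t ∈ E, t) ∣ p - 1 := (Nat.modEq_iff_dvd' hp1).1 hmod.symm
  obtain ⟨g, hg⟩ := IsCyclic.exists_generator (α := (ZMod p)ˣ)
  have hog : orderOf g = p - 1 := by
    rw [orderOf_eq_card_of_forall_mem_zpowers hg, Nat.card_eq_fintype_card,
      ZMod.card_units]
  set ζ : (ZMod p)ˣ := g ^ ((p - 1) / ∏ t ∈ E, t) with hζdef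
  have hζ : orderOf ζ = ∏ t ∈ E, t := by
    rw [hζdef, orderOf_pow, hog, Nat.gcd_eq_right (Nat.div_dvd_of_dvd hdvd),
      Nat.div_div_self hdvd (by omega)]
  have hconv : ∀ h : Stmt3Aux.Amb E p,
      (Set.range fun i : ℤ => (i • Stmt3Aux.vA E ζ) h)
        = Set.range fun i : ℤ => Stmt3Aux.act E ζ i h := fun h =>
    congrArg Set.range (funext fun i => Stmt3Aux.vA_zpow E ζ i h)
  refine ⟨AlgRealization.mk (G := Stmt3Aux.Amb E p) (Stmt3Aux.vA E ζ)
    (Stmt3Aux.Hsub E p) ?_⟩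
  ext n
  simp only [Set.mem_setOf_eq, Finset.mem_coe]
  constructor
  · intro hn
    set h : Stmt3Aux.Amb E p :=
      fun j => if j = ⟨n, hn⟩ then ((1 : ZMod p), (1 : ZMod p)) else 0 with hhdef
    have hmem : h ∈ Stmt3Aux.Hsub E p := by
      rw [Stmt3Aux.mem_Hsub]
      intro j
      by_cases hj : j = ⟨n, hn⟩ <;> simp [hhdef, hj]
    have hne0 : h ≠ 0 := by
      intro h0
      have h1 := congrFun h0 ⟨n, hn⟩
      simp [hhdef, Prod.ext_iff] at h1
    have hmax : ∀ j, h j ≠ 0 → (j : ℕ) ≤ ((⟨n, hn⟩ : {x // x ∈ E}) : ℕ) := by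
      intro j hj
      by_cases hje : j = ⟨n, hn⟩
      · rw [hje]
      · exfalso; exact hj (by simp [hhdef, hje])
    have hjne : h (⟨n, hn⟩ : {x // x ∈ E}) ≠ 0 := by
      simp [hhdef, Prod.ext_iff]
    refine ⟨h, hmem, hne0, ?_⟩
    rw [hconv]
    exact Stmt3Aux.count_main E ζ hpos hζ h hmem ⟨n, hn⟩ hjne hmax
  · rintro ⟨h, hHmem, hne0, hcard⟩
    have hex : ∃ j, h j ≠ 0 := by
      by_contra hc
      push_neg at hc
      exact hne0 (funext fun j => hc j)
    obtain ⟨j0, hj0⟩ := hex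
    obtain ⟨jm, hjmmem, hjmmax⟩ := Finset.exists_max_image
      (Finset.univ.filter fun j => h j ≠ 0) (fun j => (j : ℕ)) ⟨j0, by simp [hj0]⟩
    simp only [Finset.mem_filter, Finset.mem_univ, true_and] at hjmmem
    have hc2 := Stmt3Aux.count_main E ζ hpos hζ h hHmem jm hjmmem
      (fun j hj => hjmmax j (by simp [hj]))
    rw [hconv] at hcard
    have : n = ((jm : ℕ)) := by rw [← hcard, hc2]
    rw [this]
    exact jm.2
end

section
/- Let U and V be unitary operators on Hilbert spaces H₁ and H₂. Suppose there exist complex numbers α ≠ β with |α|, |β| ≤ 1 and a sequence of integers n_k such that U^{n_k} → αI and V^{n_k} → βI in the weak operator topology. Then the maximal spectral types of U and V are mutually singular. -/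
open MeasureTheory Filter Topology

noncomputable instance : MeasurableSpace Circle := borel Circle
instance : BorelSpace Circle := ⟨rfl⟩

/-- `ν` is the spectral measure of the vector `f` for the unitary `U`:
`∫_𝕋 zⁿ dν = ⟨Uⁿ f, f⟩` for all `n ∈ ℤ`. -/
def IsSpectralMeasure {H : Type*} [NormedAddCommGroup H] [InnerProductSpace ℂ H]
    (U : H ≃ₗᵢ[ℂ] H) (f : H) (ν : Measure Circle) : Prop :=
  ∀ n : ℤ, ∫ z : Circle, ((z ^ n : Circle) : ℂ) ∂ν = (inner ℂ ((U ^ n) f) f : ℂ)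

/-- `σ` is a measure of maximal spectral type of the unitary `U` : it is a finite
measure dominating the spectral measure of every vector, and is minimal (w.r.t.
absolute continuity) among measures with this property. -/
def IsMaximalSpectralType {H : Type*} [NormedAddCommGroup H] [InnerProductSpace ℂ H]
    (U : H ≃ₗᵢ[ℂ] H) (σ : Measure Circle) : Prop :=
  IsFiniteMeasure σ ∧
  (∀ f : H, ∃ ν : Measure Circle, IsSpectralMeasure U f ν ∧ ν ≪ σ) ∧
  (∀ τ : Measure Circle, (∀ f : H, ∃ ν : Measure Circle, IsSpectralMeasure U f ν ∧ ν ≪ τ) →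
      σ ≪ τ)

/-! ### Auxiliary material -/

/-- The character `z ↦ zᵐ` on the circle, as a continuous map. -/
noncomputable def charC (m : ℤ) : C(Circle, ℂ) :=
  ⟨fun z => ((z ^ m : Circle) : ℂ), continuous_subtype_val.comp (continuous_zpow m)⟩

lemma charC_apply (m : ℤ) (z : Circle) : charC m z = ((z ^ m : Circle) : ℂ) := rfl

lemma charC_add (a b : ℤ) : charC (a + b) = charC a * charC b := by
  ext z; simp [charC_apply, zpow_add, Circle.coe_mul]

lemma star_charC (m : ℤ) : star (charC m) = charC (-m) := by
  ext z
  simp only [ContinuousMap.star_apply, charC_apply, zpow_neg]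
  rw [Circle.coe_inv_eq_conj]
  rfl

lemma norm_charC (m : ℤ) (z : Circle) : ‖charC m z‖ = 1 := by
  simp [charC_apply, Circle.norm_coe]

/-- The range of `charC` as a submonoid of `C(Circle, ℂ)`. -/
noncomputable def charSubmonoid : Submonoid C(Circle, ℂ) where
  carrier := Set.range charC
  one_mem' := ⟨0, by ext z; simp [charC_apply]⟩
  mul_mem' := by
    rintro _ _ ⟨a, rfl⟩ ⟨b, rfl⟩
    exact ⟨a + b, charC_add a b⟩

/-- Trigonometric polynomials are dense in `C(Circle, ℂ)`. -/
lemma mem_closure_span_charC (g : C(Circle, ℂ)) :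
    g ∈ closure ((Submodule.span ℂ (Set.range charC) : Submodule ℂ C(Circle, ℂ)) :
      Set C(Circle, ℂ)) := by
  have hsep : (StarAlgebra.adjoin ℂ ({charC 1} : Set C(Circle, ℂ))).SeparatesPoints := by
    intro x y hxy
    refine ⟨_, ⟨charC 1, StarAlgebra.subset_adjoin _ _ (Set.mem_singleton _), rfl⟩, ?_⟩
    simp only [charC_apply, zpow_one]
    exact fun h => hxy (Circle.coe_injective h)
  have htop := ContinuousMap.starSubalgebra_topologicalClosure_eq_top_of_separatesPoints _ hsep
  have hg : g ∈ (StarAlgebra.adjoin ℂ ({charC 1} : Set C(Circle, ℂ))).topologicalClosure := by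
    rw [htop]; trivial
  have hsub : ((StarAlgebra.adjoin ℂ ({charC 1} : Set C(Circle, ℂ))) : Set C(Circle, ℂ)) ⊆
      ((Submodule.span ℂ (Set.range charC) : Submodule ℂ C(Circle, ℂ)) : Set C(Circle, ℂ)) := by
    intro p hp
    have h1 : p ∈ Subalgebra.toSubmodule (StarAlgebra.adjoin ℂ
        ({charC 1} : Set C(Circle, ℂ))).toSubalgebra := hp
    rw [StarAlgebra.adjoin_eq_span] at h1
    have hcl : (Submonoid.closure (({charC 1} : Set C(Circle, ℂ)) ∪
        star ({charC 1} : Set C(Circle, ℂ))) : Set C(Circle, ℂ)) ⊆ Set.range charC := by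
      have : Submonoid.closure (({charC 1} : Set C(Circle, ℂ)) ∪
          star ({charC 1} : Set C(Circle, ℂ))) ≤ charSubmonoid := by
        rw [Submonoid.closure_le]
        rintro x (hx | hx)
        · rw [Set.mem_singleton_iff] at hx
          exact ⟨1, hx.symm⟩
        · rw [Set.mem_star, Set.mem_singleton_iff] at hx
          refine ⟨-1, ?_⟩
          rw [← star_charC, ← hx, star_star]
      exact this
    exact Submodule.span_le.2 (subset_trans hcl Submodule.subset_span) h1
  exact closure_mono hsub hg

/-- The key Fourier-convergence property of a measure on the circle. -/
def FP (c : ℂ) (n : ℕ → ℤ) (ν : Measure Circle) : Prop :=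
  ∀ m : ℤ, Tendsto (fun k => ∫ z, charC m z * charC (n k) z ∂ν) atTop
    (𝓝 (c * ∫ z, charC m z ∂ν))

lemma integrable_of_continuous (ν : Measure Circle) [IsFiniteMeasure ν] {f : Circle → ℂ}
    (hf : Continuous f) : Integrable f ν :=
  hf.integrable_of_hasCompactSupport (HasCompactSupport.of_compactSpace f)

/-- Convergence for elements of the span of characters. -/
lemma tendsto_span (ν : Measure Circle) [IsFiniteMeasure ν] (c : ℂ) (n : ℕ → ℤ) (hm : FP c n ν)
    {p : C(Circle, ℂ)} (hp : p ∈ Submodule.span ℂ (Set.range charC)) :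
    Tendsto (fun k => ∫ z, p z * charC (n k) z ∂ν) atTop (𝓝 (c * ∫ z, p z ∂ν)) := by
  induction hp using Submodule.span_induction with
  | mem x h =>
    obtain ⟨m, rfl⟩ := h
    exact hm m
  | zero => simp [tendsto_const_nhds]
  | add x y hx hy hx' hy' =>
    have hix : ∀ k, Integrable (fun z => x z * charC (n k) z) ν := fun k =>
      integrable_of_continuous ν (x.continuous.mul (charC (n k)).continuous)
    have hiy : ∀ k, Integrable (fun z => y z * charC (n k) z) ν := fun k =>
      integrable_of_continuous ν (y.continuous.mul (charC (n k)).continuous)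
    have heq : (fun k => ∫ z, (x + y) z * charC (n k) z ∂ν) =
        fun k => (∫ z, x z * charC (n k) z ∂ν) + ∫ z, y z * charC (n k) z ∂ν := by
      funext k
      rw [← integral_add (hix k) (hiy k)]
      simp [add_mul]
    rw [heq]
    have : c * ∫ z, (x + y) z ∂ν = c * (∫ z, x z ∂ν) + c * ∫ z, y z ∂ν := by
      rw [show (fun z => (x + y) z) = fun z => x z + y z from rfl,
        integral_add (integrable_of_continuous ν x.continuous)
          (integrable_of_continuous ν y.continuous), mul_add]
    rw [this]
    exact hx'.add hy'
  | smul a x hx hx' =>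
    have heq : (fun k => ∫ z, (a • x) z * charC (n k) z ∂ν) =
        fun k => a * ∫ z, x z * charC (n k) z ∂ν := by
      funext k
      rw [show (fun z => (a • x) z * charC (n k) z) = fun z => a • (x z * charC (n k) z) from
        funext fun z => by simp [smul_mul_assoc, smul_eq_mul, mul_assoc], integral_smul, smul_eq_mul]
    rw [heq]
    have : c * ∫ z, (a • x) z ∂ν = a * (c * ∫ z, x z ∂ν) := by
      rw [show (fun z => (a • x) z) = fun z => a • x z from rfl, integral_smul]
      simp [smul_eq_mul]; ring
    rw [this]
    exact hx'.const_mul a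

/-- The main weak-convergence lemma: if the Fourier coefficients of `ν` along `n k`
converge as dictated by `FP`, then `∫ h · z^{n k} dν → c ∫ h dν` for every integrable `h`. -/
lemma tendsto_integral_mul_char (ν : Measure Circle) [IsFiniteMeasure ν] (c : ℂ) (n : ℕ → ℤ)
    (hm : FP c n ν) {h : Circle → ℂ} (hh : Integrable h ν) :
    Tendsto (fun k => ∫ z, h z * charC (n k) z ∂ν) atTop (𝓝 (c * ∫ z, h z ∂ν)) := by
  rw [Metric.tendsto_atTop]
  intro ε hε
  set C : ℝ := 2 + ‖c‖ with hC
  have hc0 : (0:ℝ) ≤ ‖c‖ := norm_nonneg c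
  have hC0 : 0 < C := by positivity
  obtain ⟨g₀, -, hg2, hg3⟩ := hh.exists_hasCompactSupport_integral_sub_le
    (show 0 < ε / (4 * C) by positivity)
  set g : C(Circle, ℂ) := ⟨g₀, hg3.1⟩ with hgdef
  set M : ℝ := (ν Set.univ).toReal with hM
  have hM0 : 0 ≤ M := ENNReal.toReal_nonneg
  obtain ⟨p, hpmem, hpdist⟩ := Metric.mem_closure_iff.1 (mem_closure_span_charC g)
    (ε / (4 * C * (M + 1))) (by positivity)
  have hgp : ∫ z, ‖g z - p z‖ ∂ν ≤ ε / (4 * C) := by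
    have hb : ∀ z, ‖g z - p z‖ ≤ ε / (4 * C * (M + 1)) := fun z => by
      rw [← dist_eq_norm]
      exact le_of_lt (lt_of_le_of_lt (ContinuousMap.dist_apply_le_dist z) hpdist)
    calc ∫ z, ‖g z - p z‖ ∂ν ≤ ∫ _z, ε / (4 * C * (M + 1)) ∂ν := by
          refine integral_mono ?_ (integrable_const _) hb
          exact (integrable_of_continuous ν (g.continuous.sub p.continuous)).norm
      _ = M * (ε / (4 * C * (M + 1))) := by rw [integral_const]; simp [hM, smul_eq_mul, measureReal_def]
      _ ≤ ε / (4 * C) := by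
          rw [mul_comm, div_mul_eq_mul_div, div_le_div_iff₀ (by positivity) (by positivity)]
          nlinarith [hM0, hε.le, hC0.le]
  have hhp : ∫ z, ‖h z - p z‖ ∂ν ≤ ε / (2 * C) := by
    have h1 : Integrable (fun z => ‖h z - g z‖) ν := (hh.sub hg3.2).norm
    have h2 : Integrable (fun z => ‖g z - p z‖) ν :=
      (integrable_of_continuous ν (g.continuous.sub p.continuous)).norm
    calc ∫ z, ‖h z - p z‖ ∂ν ≤ ∫ z, ‖h z - g z‖ + ‖g z - p z‖ ∂ν := by
          refine integral_mono ((hh.sub (integrable_of_continuous ν p.continuous)).norm)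
            (h1.add h2) (fun z => ?_)
          calc ‖h z - p z‖ = ‖(h z - g z) + (g z - p z)‖ := by ring_nf
            _ ≤ ‖h z - g z‖ + ‖g z - p z‖ := norm_add_le _ _
      _ = (∫ z, ‖h z - g z‖ ∂ν) + ∫ z, ‖g z - p z‖ ∂ν := integral_add h1 h2
      _ ≤ ε / (4 * C) + ε / (4 * C) := add_le_add hg2 hgp
      _ = ε / (2 * C) := by
          have h2c : (2:ℝ) + ‖c‖ ≠ 0 := by positivity
          rw [hC]
          field_simp
          ring
  have hplim := tendsto_span ν c n hm hpmem
  obtain ⟨N, hN⟩ := (Metric.tendsto_atTop.1 hplim) (ε / 4) (by positivity)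
  refine ⟨N, fun k hk => ?_⟩
  have hhint : Integrable (fun z => h z * charC (n k) z) ν := by
    have := hh.bdd_mul (charC (n k)).continuous.aestronglyMeasurable
      (Filter.Eventually.of_forall fun z => (norm_charC _ z).le)
    simpa [mul_comm] using this
  have hpint : Integrable (fun z => p z * charC (n k) z) ν :=
    integrable_of_continuous ν (p.continuous.mul (charC (n k)).continuous)
  have hpint' : Integrable (fun z => p z) ν := integrable_of_continuous ν p.continuous
  have e1 : ‖(∫ z, h z * charC (n k) z ∂ν) - ∫ z, p z * charC (n k) z ∂ν‖ ≤ ε / (2 * C) := by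
    rw [← integral_sub hhint hpint]
    calc ‖∫ z, h z * charC (n k) z - p z * charC (n k) z ∂ν‖
        ≤ ∫ z, ‖h z * charC (n k) z - p z * charC (n k) z‖ ∂ν := norm_integral_le_integral_norm _
      _ = ∫ z, ‖h z - p z‖ ∂ν := by
          congr 1; funext z
          rw [← sub_mul, norm_mul, norm_charC, mul_one]
      _ ≤ ε / (2 * C) := hhp
  have e2 : ‖(∫ z, p z * charC (n k) z ∂ν) - c * ∫ z, p z ∂ν‖ < ε / 4 := by rw [← dist_eq_norm]; exact hN k hk
  have e3 : ‖c * (∫ z, p z ∂ν) - c * ∫ z, h z ∂ν‖ ≤ ‖c‖ * (ε / (2 * C)) := by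
    rw [← mul_sub, norm_mul]
    refine mul_le_mul_of_nonneg_left ?_ hc0
    rw [← integral_sub hpint' hh]
    calc ‖∫ z, p z - h z ∂ν‖ ≤ ∫ z, ‖p z - h z‖ ∂ν := norm_integral_le_integral_norm _
      _ = ∫ z, ‖h z - p z‖ ∂ν := by congr 1; funext z; rw [norm_sub_rev]
      _ ≤ ε / (2 * C) := hhp
  calc dist (∫ z, h z * charC (n k) z ∂ν) (c * ∫ z, h z ∂ν)
        = ‖(∫ z, h z * charC (n k) z ∂ν) - c * ∫ z, h z ∂ν‖ := by rw [dist_eq_norm]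
      _ ≤ ‖(∫ z, h z * charC (n k) z ∂ν) - ∫ z, p z * charC (n k) z ∂ν‖ +
          ‖(∫ z, p z * charC (n k) z ∂ν) - c * ∫ z, p z ∂ν‖ +
          ‖c * (∫ z, p z ∂ν) - c * ∫ z, h z ∂ν‖ := by
            have h4 : (∫ z, h z * charC (n k) z ∂ν) - c * ∫ z, h z ∂ν =
                ((∫ z, h z * charC (n k) z ∂ν) - ∫ z, p z * charC (n k) z ∂ν) +
                (((∫ z, p z * charC (n k) z ∂ν) - c * ∫ z, p z ∂ν) +
                (c * (∫ z, p z ∂ν) - c * ∫ z, h z ∂ν)) := by ring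
            rw [h4]
            refine le_trans (norm_add_le _ _) ?_
            rw [add_assoc]
            exact add_le_add_right (norm_add_le _ _) _
      _ < ε / (2 * C) + ε / 4 + ‖c‖ * (ε / (2 * C)) := by
            exact add_lt_add_of_lt_of_le (add_lt_add_of_le_of_lt e1 e2) e3
      _ ≤ ε := by
            rw [hC]
            have ht0 : 0 ≤ ε / (2 * (2 + ‖c‖)) := by positivity
            have hte : ε / (2 * (2 + ‖c‖)) * (2 * (2 + ‖c‖)) = ε :=
              div_mul_cancel₀ ε (by positivity)
            nlinarith [ht0, hε.le, mul_nonneg ht0 hc0]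

/-- Mutual singularity from distinct Fourier limits. -/
lemma mutuallySingular_of_FP (ν₁ ν₂ : Measure Circle) [IsFiniteMeasure ν₁] [IsFiniteMeasure ν₂]
    {c₁ c₂ : ℂ} (hc : c₁ ≠ c₂) (n : ℕ → ℤ) (h₁ : FP c₁ n ν₁) (h₂ : FP c₂ n ν₂) :
    ν₁ ⟂ₘ ν₂ := by
  set ρ : Measure Circle := ν₂.withDensity (ν₁.rnDeriv ν₂) with hρdef
  have hρle : ρ ≤ ν₁ := Measure.withDensity_rnDeriv_le _ _
  haveI : IsFiniteMeasure ρ := isFiniteMeasure_of_le ν₁ hρle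
  have hρ1 : ρ ≪ ν₁ := Measure.absolutelyContinuous_of_le hρle
  have hρ2 : ρ ≪ ν₂ := withDensity_absolutelyContinuous _ _
  have key : ∀ (c : ℂ) (ν : Measure Circle), ∀ _ : IsFiniteMeasure ν, FP c n ν → ρ ≪ ν →
      Tendsto (fun k => ∫ z, charC (n k) z ∂ρ) atTop (𝓝 (c * ((ρ Set.univ).toReal : ℂ))) := by
    intro c ν hfin hF hac
    haveI := hfin
    have hden : Integrable (fun z => (((ρ.rnDeriv ν z).toReal : ℝ) : ℂ)) ν :=
      (Measure.integrable_toReal_rnDeriv).ofReal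
    have hlim := tendsto_integral_mul_char ν c n hF hden
    have he1 : ∀ k, ∫ z, (((ρ.rnDeriv ν z).toReal : ℝ) : ℂ) * charC (n k) z ∂ν =
        ∫ z, charC (n k) z ∂ρ := by
      intro k
      rw [← integral_rnDeriv_smul hac (f := fun z => charC (n k) z)]
      congr 1
    have he2 : ∫ z, (((ρ.rnDeriv ν z).toReal : ℝ) : ℂ) ∂ν = ((ρ Set.univ).toReal : ℂ) := by
      have := integral_rnDeriv_smul hac (f := fun _ : Circle => (1 : ℂ))
      rw [show (fun z => (((ρ.rnDeriv ν z).toReal : ℝ) : ℂ)) =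
        fun z => (ρ.rnDeriv ν z).toReal • (1 : ℂ) from funext fun z => by
          rw [Complex.real_smul, mul_one], this, integral_const]
      simp [Complex.real_smul, measureReal_def]
    simp_rw [he1, he2] at hlim
    exact hlim
  have l1 := key c₁ ν₁ inferInstance h₁ hρ1
  have l2 := key c₂ ν₂ inferInstance h₂ hρ2
  have huniq := tendsto_nhds_unique l1 l2
  have hR : ((ρ Set.univ).toReal : ℂ) = 0 := by
    by_contra hne
    exact hc (mul_right_cancel₀ hne huniq)
  have hρ0 : ρ = 0 := by
    rw [Complex.ofReal_eq_zero] at hR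
    have huniv : ρ Set.univ = 0 := by
      rcases (ENNReal.toReal_eq_zero_iff _).1 hR with h | h
      · exact h
      · exact absurd h (measure_ne_top ρ _)
    exact Measure.measure_univ_eq_zero.1 huniv
  have hdec := ν₁.haveLebesgueDecomposition_add ν₂
  rw [← hρdef, hρ0, add_zero] at hdec
  rw [hdec]
  exact Measure.mutuallySingular_singularPart ν₁ ν₂

/-- If `μ ≪ a + b` and `μ ⟂ₘ b` then `μ ≪ a`. -/
lemma absCont_of_mutuallySingular {a b μ : Measure Circle} (hμ : μ ≪ a + b) (hs : μ ⟂ₘ b) :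
    μ ≪ a := by
  obtain ⟨A, hAmeas, hμA, hbA⟩ := hs
  intro E hE
  have h1 : μ (E ∩ A) = 0 :=
    le_antisymm (le_trans (measure_mono Set.inter_subset_right) hμA.le) zero_le
  have h2 : μ (E \ A) = 0 := by
    apply hμ
    have hle : (a + b) (E \ A) ≤ a E + b Aᶜ := by
      rw [Measure.coe_add, Pi.add_apply]
      exact add_le_add (measure_mono Set.diff_subset)
        (measure_mono (fun x hx => hx.2))
    rw [hE, hbA, add_zero] at hle
    exact le_antisymm hle zero_le
  have := measure_inter_add_diff E hAmeas (μ := μ)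
  rw [h1, h2, add_zero] at this
  exact this.symm

/-- A spectral measure inherits the Fourier property from weak convergence of `U ^ (n k)`. -/
lemma FP_of_spectral {H : Type*} [NormedAddCommGroup H] [InnerProductSpace ℂ H]
    (U : H ≃ₗᵢ[ℂ] H) (f : H) (ν : Measure Circle) (hspec : IsSpectralMeasure U f ν)
    (c : ℂ) (n : ℕ → ℤ)
    (hU : ∀ a b : H, Tendsto (fun k => (inner ℂ ((U ^ n k) a) b : ℂ)) atTop
      (𝓝 (c * (inner ℂ a b : ℂ)))) :
    FP c n ν := by
  intro m
  have heq : ∀ k, ∫ z, charC m z * charC (n k) z ∂ν =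
      (inner ℂ ((U ^ n k) ((U ^ m) f)) f : ℂ) := by
    intro k
    have h1 : (fun z : Circle => charC m z * charC (n k) z) =
        fun z : Circle => ((z ^ (m + n k) : Circle) : ℂ) := by
      funext z
      rw [charC_apply, charC_apply, ← Circle.coe_mul, ← zpow_add]
    rw [show ∫ z, charC m z * charC (n k) z ∂ν =
      ∫ z, ((z ^ (m + n k) : Circle) : ℂ) ∂ν from by rw [h1]]
    rw [hspec (m + n k)]
    congr 1
    rw [add_comm, zpow_add]
    rfl
  have h2 := hU ((U ^ m) f) f
  rw [show (inner ℂ ((U ^ m) f) f : ℂ) = ∫ z, ((z ^ m : Circle) : ℂ) ∂ν from (hspec m).symm] at h2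
  rw [show (fun k => ∫ z, charC m z * charC (n k) z ∂ν) =
    fun k => (inner ℂ ((U ^ n k) ((U ^ m) f)) f : ℂ) from funext heq]
  exact h2

lemma isSpectralMeasure_zero {H : Type*} [NormedAddCommGroup H] [InnerProductSpace ℂ H]
    (U : H ≃ₗᵢ[ℂ] H) : IsSpectralMeasure U (0 : H) (0 : Measure Circle) := by
  intro m
  simp

/-- A vector with an infinite spectral measure must be zero. -/
lemma vec_eq_zero {H : Type*} [NormedAddCommGroup H] [InnerProductSpace ℂ H]
    (U : H ≃ₗᵢ[ℂ] H) (f : H) (ν : Measure Circle) (hspec : IsSpectralMeasure U f ν)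
    (htop : ν Set.univ = ⊤) : f = 0 := by
  have h0 := hspec 0
  have hni : ¬ Integrable (fun _ : Circle => (1 : ℂ)) ν := by
    rw [integrable_const_iff]
    push_neg
    exact ⟨one_ne_zero, by intro h; exact measure_ne_top ν Set.univ htop⟩
  rw [show (fun z : Circle => ((z ^ (0 : ℤ) : Circle) : ℂ)) = fun _ => (1 : ℂ) from
    funext fun z => by simp, integral_undef hni] at h0
  have hff : (inner ℂ f f : ℂ) = 0 := by
    have : ((U ^ (0 : ℤ)) f) = f := by
      rw [zpow_zero]
      rfl
    rw [this] at h0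
    exact h0.symm
  exact inner_self_eq_zero.1 hff

theorem stmt5 {H₁ H₂ : Type*}
    [NormedAddCommGroup H₁] [InnerProductSpace ℂ H₁] [CompleteSpace H₁]
    [NormedAddCommGroup H₂] [InnerProductSpace ℂ H₂] [CompleteSpace H₂]
    (U : H₁ ≃ₗᵢ[ℂ] H₁) (V : H₂ ≃ₗᵢ[ℂ] H₂) (α β : ℂ) (hαβ : α ≠ β)
    (hα : ‖α‖ ≤ 1) (hβ : ‖β‖ ≤ 1) (n : ℕ → ℤ)
    (hU : ∀ f g : H₁, Tendsto (fun k => (inner ℂ ((U ^ n k) f) g : ℂ)) atTop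
      (𝓝 (α * (inner ℂ f g : ℂ))))
    (hV : ∀ f g : H₂, Tendsto (fun k => (inner ℂ ((V ^ n k) f) g : ℂ)) atTop
      (𝓝 (β * (inner ℂ f g : ℂ))))
    (σU σV : Measure Circle)
    (hσU : IsMaximalSpectralType U σU) (hσV : IsMaximalSpectralType V σV) :
    σU ⟂ₘ σV := by
  obtain ⟨hσUfin, hσUdom, hσUmin⟩ := hσU
  obtain ⟨hσVfin, hσVdom, hσVmin⟩ := hσV
  haveI := hσUfin; haveI := hσVfin
  -- Step A: every finite measure with the `α`-Fourier property is singular to `σV`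
  have stepA : ∀ ν : Measure Circle, IsFiniteMeasure ν → FP α n ν → ν ⟂ₘ σV := by
    intro ν hν hF
    haveI := hν
    have hdec := σV.haveLebesgueDecomposition_add ν
    have hρ'ac : ν.withDensity (σV.rnDeriv ν) ≪ ν := withDensity_absolutelyContinuous _ _
    have hmin : σV ≪ σV.singularPart ν := by
      apply hσVmin
      intro g
      obtain ⟨μ, hμspec, hμac⟩ := hσVdom g
      rcases eq_top_or_lt_top (μ Set.univ) with htop | hfin
      · refine ⟨0, ?_, Measure.absolutelyContinuous_of_le (Measure.zero_le _)⟩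
        rw [vec_eq_zero V g μ hμspec htop]
        exact isSpectralMeasure_zero V
      · haveI : IsFiniteMeasure μ := ⟨hfin⟩
        have hFμ : FP β n μ := FP_of_spectral V g μ hμspec β n hV
        have hsing : ν ⟂ₘ μ := mutuallySingular_of_FP ν μ hαβ n hF hFμ
        have hμρ' : μ ⟂ₘ ν.withDensity (σV.rnDeriv ν) :=
          hsing.symm.mono_ac (Measure.AbsolutelyContinuous.refl μ) hρ'ac
        exact ⟨μ, hμspec, absCont_of_mutuallySingular (hdec ▸ hμac) hμρ'⟩
    exact ((Measure.mutuallySingular_singularPart σV ν).mono_ac hmin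
      (Measure.AbsolutelyContinuous.refl ν)).symm
  -- Step B: conclude
  have hdec := σU.haveLebesgueDecomposition_add σV
  have hρac : σV.withDensity (σU.rnDeriv σV) ≪ σV := withDensity_absolutelyContinuous _ _
  have hmin : σU ≪ σU.singularPart σV := by
    apply hσUmin
    intro f
    obtain ⟨μ, hμspec, hμac⟩ := hσUdom f
    rcases eq_top_or_lt_top (μ Set.univ) with htop | hfin
    · refine ⟨0, ?_, Measure.absolutelyContinuous_of_le (Measure.zero_le _)⟩
      rw [vec_eq_zero U f μ hμspec htop]
      exact isSpectralMeasure_zero U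
    · haveI : IsFiniteMeasure μ := ⟨hfin⟩
      have hFμ : FP α n μ := FP_of_spectral U f μ hμspec α n hU
      have hsing : μ ⟂ₘ σV := stepA μ inferInstance hFμ
      have hμρ : μ ⟂ₘ σV.withDensity (σU.rnDeriv σV) :=
        hsing.mono_ac (Measure.AbsolutelyContinuous.refl μ) hρac
      exact ⟨μ, hμspec, absCont_of_mutuallySingular (hdec ▸ hμac) hμρ⟩
  exact (Measure.mutuallySingular_singularPart σU σV).mono_ac hmin
    (Measure.AbsolutelyContinuous.refl σV)
end

section
/- Let V be a unitary operator with simple continuous spectrum on a Hilbert space H, and suppose aI + bV lies in the weak closure of the powers {Vⁿ : n ∈ ℤ} for some nonzero complex a, b. Then every (V⊗V)-invariant closed subspace of H⊗H containing h⊗h and h⊗Vh for a cyclic vector h must be all of H⊗H; in particular the spectral multiplicity of V⊗V is at most 2. -/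
open Filter Topology
open scoped InnerProductSpace

/-- The `U`-cyclic subspace generated by `f`. -/
noncomputable def cyclicSubspace {H : Type*} [NormedAddCommGroup H] [InnerProductSpace ℂ H]
    (U : H ≃ₗᵢ[ℂ] H) (f : H) : Submodule ℂ H :=
  (Submodule.span ℂ (Set.range fun n : ℤ => (U ^ n) f)).topologicalClosure


/-- powers of a linear isometry equiv preserve an invariant submodule -/
lemma zpow_mem_aux {K : Type*} [NormedAddCommGroup K] [InnerProductSpace ℂ K]
    (W : K ≃ₗᵢ[ℂ] K) (C : Submodule ℂ K)
    (h1 : ∀ x ∈ C, W x ∈ C) (h2 : ∀ x ∈ C, W.symm x ∈ C) :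
    ∀ m : ℤ, ∀ x ∈ C, (W ^ m) x ∈ C := by
  intro m
  induction m using Int.induction_on with
  | zero => intro x hx; simpa using hx
  | succ k ih =>
    intro x hx
    have : (W ^ ((k : ℤ) + 1)) x = (W ^ (k : ℤ)) (W x) := by
      rw [zpow_add_one]; rfl
    rw [this]; exact ih _ (h1 x hx)
  | pred k ih =>
    intro x hx
    have : (W ^ (-(k : ℤ) - 1)) x = (W ^ (-(k : ℤ))) (W.symm x) := by
      rw [zpow_sub_one]; rfl
    rw [this]; exact ih _ (h2 x hx)

/-- a vector weakly approximated by members of a closed submodule lies in it -/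
lemma weakLimit_mem_aux {K : Type*} [NormedAddCommGroup K] [InnerProductSpace ℂ K]
    [CompleteSpace K] (C : Submodule ℂ K) (hC : IsClosed (C : Set K))
    (u : ℕ → K) (L : K) (hu : ∀ k, u k ∈ C)
    (htend : ∀ g : K, Tendsto (fun k => (⟪u k, g⟫_ℂ)) atTop (𝓝 ⟪L, g⟫_ℂ)) :
    L ∈ C := by
  have : CompleteSpace C := hC.completeSpace_coe
  rw [← Submodule.orthogonal_orthogonal C]
  rw [Submodule.mem_orthogonal]
  intro g hg
  have h0 : ∀ k, ⟪u k, g⟫_ℂ = 0 := fun k =>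
    Submodule.inner_right_of_mem_orthogonal (hu k) hg
  have hL : ⟪L, g⟫_ℂ = 0 := by
    have := htend g
    simp only [h0] at this
    exact (tendsto_nhds_unique tendsto_const_nhds this).symm
  have h2 : (starRingEnd ℂ) ⟪g, L⟫_ℂ = ⟪L, g⟫_ℂ := inner_conj_symm L g
  rw [hL] at h2
  exact star_eq_zero.mp h2

/-- extend weak convergence from a dense submodule to everything, given a norm bound -/
lemma dense_ext_aux {K : Type*} [NormedAddCommGroup K] [InnerProductSpace ℂ K]
    (M : Submodule ℂ K) (hM : Dense (M : Set K)) (u : ℕ → K) (L : K) (R : ℝ)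
    (hR : ∀ k, ‖u k‖ ≤ R)
    (htend : ∀ g ∈ M, Tendsto (fun k => (⟪u k, g⟫_ℂ)) atTop (𝓝 ⟪L, g⟫_ℂ)) :
    ∀ g : K, Tendsto (fun k => (⟪u k, g⟫_ℂ)) atTop (𝓝 ⟪L, g⟫_ℂ) := by
  intro g
  rw [Metric.tendsto_atTop]
  intro ε hε
  set B : ℝ := R + ‖L‖ + 1 with hB
  have hRpos : 0 ≤ R := le_trans (norm_nonneg _) (hR 0)
  have hBpos : 0 < B := by positivity
  obtain ⟨g', hg'M, hg'⟩ : ∃ g' ∈ M, ‖g - g'‖ < ε / (2 * B) := by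
    have : g ∈ closure (M : Set K) := hM g
    rw [Metric.mem_closure_iff] at this
    obtain ⟨g', hg'M, hd⟩ := this (ε / (2 * B)) (by positivity)
    exact ⟨g', hg'M, by rwa [dist_eq_norm] at hd⟩
  have h1 := htend g' hg'M
  rw [Metric.tendsto_atTop] at h1
  obtain ⟨N, hN⟩ := h1 (ε / 2) (by positivity)
  refine ⟨N, fun k hk => ?_⟩
  have key : ⟪u k, g⟫_ℂ - ⟪L, g⟫_ℂ =
      (⟪u k, g'⟫_ℂ - ⟪L, g'⟫_ℂ) + (⟪u k, g - g'⟫_ℂ - ⟪L, g - g'⟫_ℂ) := by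
    rw [inner_sub_right, inner_sub_right]; ring
  rw [dist_eq_norm, key]
  have e1 : ‖⟪u k, g'⟫_ℂ - ⟪L, g'⟫_ℂ‖ < ε / 2 := by
    have := hN k hk; rwa [dist_eq_norm] at this
  have e2 : ‖⟪u k, g - g'⟫_ℂ - ⟪L, g - g'⟫_ℂ‖ ≤ (R + ‖L‖) * ‖g - g'‖ := by
    calc ‖⟪u k, g - g'⟫_ℂ - ⟪L, g - g'⟫_ℂ‖
        ≤ ‖⟪u k, g - g'⟫_ℂ‖ + ‖⟪L, g - g'⟫_ℂ‖ := norm_sub_le _ _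
      _ ≤ ‖u k‖ * ‖g - g'‖ + ‖L‖ * ‖g - g'‖ :=
          add_le_add (norm_inner_le_norm _ _) (norm_inner_le_norm _ _)
      _ ≤ R * ‖g - g'‖ + ‖L‖ * ‖g - g'‖ := by
          have := hR k
          nlinarith [norm_nonneg (g - g')]
      _ = (R + ‖L‖) * ‖g - g'‖ := by ring
  have e3 : (R + ‖L‖) * ‖g - g'‖ ≤ ε / 2 := by
    have h4 : (R + ‖L‖) * ‖g - g'‖ ≤ B * (ε / (2 * B)) := by
      apply mul_le_mul _ (le_of_lt hg') (norm_nonneg _) (le_of_lt hBpos)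
      · rw [hB]; nlinarith [norm_nonneg L]
    have h5 : B * (ε / (2 * B)) = ε / 2 := by field_simp
    linarith
  calc ‖(⟪u k, g'⟫_ℂ - ⟪L, g'⟫_ℂ) + (⟪u k, g - g'⟫_ℂ - ⟪L, g - g'⟫_ℂ)‖
      ≤ ‖⟪u k, g'⟫_ℂ - ⟪L, g'⟫_ℂ‖ + ‖⟪u k, g - g'⟫_ℂ - ⟪L, g - g'⟫_ℂ‖ := norm_add_le _ _
    _ < ε / 2 + ε / 2 := by
        apply add_lt_add_of_lt_of_le e1 (le_trans e2 e3)
    _ = ε := by ring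

lemma tp_norm_aux {H K : Type*}
    [NormedAddCommGroup H] [InnerProductSpace ℂ H]
    [NormedAddCommGroup K] [InnerProductSpace ℂ K]
    (tp : H →ₗ[ℂ] H →ₗ[ℂ] K)
    (hinner : ∀ a' b' c' d' : H,
      (⟪tp a' b', tp c' d'⟫_ℂ) = (⟪a', c'⟫_ℂ) * (⟪b', d'⟫_ℂ))
    (x y : H) : ‖tp x y‖ = ‖x‖ * ‖y‖ := by
  have h1 : (⟪tp x y, tp x y⟫_ℂ) = (⟪x, x⟫_ℂ) * (⟪y, y⟫_ℂ) := hinner x y x y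
  have h2 : ‖tp x y‖ ^ 2 = (‖x‖ * ‖y‖) ^ 2 := by
    have := inner_self_eq_norm_sq (𝕜 := ℂ) (tp x y)
    rw [h1] at this
    rw [inner_self_eq_norm_sq_to_K, inner_self_eq_norm_sq_to_K] at this
    rw [← this]
    simp [RCLike.mul_re, ← Complex.ofReal_pow, Complex.ofReal_re, Complex.ofReal_im]
    ring
  nlinarith [norm_nonneg (tp x y), norm_nonneg x, norm_nonneg y,
    mul_nonneg (norm_nonneg x) (norm_nonneg y)]

lemma W_zpow_tp_aux {H K : Type*}
    [NormedAddCommGroup H] [InnerProductSpace ℂ H]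
    [NormedAddCommGroup K] [InnerProductSpace ℂ K]
    (V : H ≃ₗᵢ[ℂ] H) (tp : H →ₗ[ℂ] H →ₗ[ℂ] K)
    (W : K ≃ₗᵢ[ℂ] K) (hW : ∀ a' b' : H, W (tp a' b') = tp (V a') (V b')) :
    ∀ (m : ℤ) (f g : H), (W ^ m) (tp f g) = tp ((V ^ m) f) ((V ^ m) g) := by
  have hWsymm : ∀ a' b' : H, W.symm (tp a' b') = tp (V.symm a') (V.symm b') := by
    intro a' b'
    apply W.injective
    rw [W.apply_symm_apply, hW, V.apply_symm_apply, V.apply_symm_apply]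
  intro m
  induction m using Int.induction_on with
  | zero => intro f g; simp
  | succ k ih =>
    intro f g
    have e1 : (W ^ ((k : ℤ) + 1)) (tp f g) = (W ^ (k : ℤ)) (W (tp f g)) := by
      rw [zpow_add_one]; rfl
    have e2 : ∀ x : H, (V ^ ((k : ℤ) + 1)) x = (V ^ (k : ℤ)) (V x) := by
      intro x; rw [zpow_add_one]; rfl
    rw [e1, hW, ih, e2, e2]
  | pred k ih =>
    intro f g
    have e1 : (W ^ (-(k : ℤ) - 1)) (tp f g) = (W ^ (-(k : ℤ))) (W.symm (tp f g)) := by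
      rw [zpow_sub_one]; rfl
    have e2 : ∀ x : H, (V ^ (-(k : ℤ) - 1)) x = (V ^ (-(k : ℤ))) (V.symm x) := by
      intro x; rw [zpow_sub_one]; rfl
    rw [e1, hWsymm, ih, e2, e2]

lemma inv_closure_aux {K : Type*} [NormedAddCommGroup K] [InnerProductSpace ℂ K]
    (e : K ≃ₗᵢ[ℂ] K) (M : Submodule ℂ K) (hM : ∀ x ∈ M, e x ∈ M) :
    ∀ x ∈ M.topologicalClosure, e x ∈ M.topologicalClosure := by
  intro x hx
  have hx' : x ∈ closure (M : Set K) := hx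
  have h1 : e x ∈ e '' closure (M : Set K) := ⟨x, hx', rfl⟩
  have h2 := image_closure_subset_closure_image e.continuous h1
  have h3 : (e '' (M : Set K)) ⊆ (M : Set K) := by
    rintro _ ⟨y, hy, rfl⟩; exact hM y hy
  exact closure_mono h3 h2

theorem stmt7 {H K : Type*}
    [NormedAddCommGroup H] [InnerProductSpace ℂ H] [CompleteSpace H]
    [NormedAddCommGroup K] [InnerProductSpace ℂ K] [CompleteSpace K]
    (V : H ≃ₗᵢ[ℂ] H) (h : H)
    -- `h` is a cyclic vector for `V` (simple spectrum)
    (hcyc : cyclicSubspace V h = ⊤)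
    -- continuous spectrum: `V` has no eigenvectors
    (hcont : ∀ (c : ℂ) (f : H), V f = c • f → f = 0)
    -- `aI + bV` belongs to the weak closure of the powers of `V`
    (a b : ℂ) (ha : a ≠ 0) (hb : b ≠ 0) (n : ℕ → ℤ)
    (hwcp : ∀ f g : H, Tendsto (fun k => (inner ℂ ((V ^ n k) f) g : ℂ)) atTop
      (𝓝 (a * (inner ℂ f g : ℂ) + b * (inner ℂ (V f) g : ℂ))))
    -- abstract tensor square `K ≅ H ⊗ H`
    (tp : H →ₗ[ℂ] H →ₗ[ℂ] K)
    (hinner : ∀ a' b' c' d' : H,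
      (inner ℂ (tp a' b') (tp c' d') : ℂ) = (inner ℂ a' c' : ℂ) * (inner ℂ b' d' : ℂ))
    (hdense : (Submodule.span ℂ {x : K | ∃ a' b' : H, x = tp a' b'}).topologicalClosure = ⊤)
    -- `W = V ⊗ V`
    (W : K ≃ₗᵢ[ℂ] K) (hW : ∀ a' b' : H, W (tp a' b') = tp (V a') (V b')) :
    (∀ C : Submodule ℂ K, IsClosed (C : Set K) →
      (∀ x ∈ C, W x ∈ C) → (∀ x ∈ C, W.symm x ∈ C) →
      tp h h ∈ C → tp h (V h) ∈ C → C = ⊤) ∧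
    ∃ f₁ f₂ : K, (cyclicSubspace W f₁ ⊔ cyclicSubspace W f₂).topologicalClosure = ⊤ := by
  clear hcont
  set S : Submodule ℂ K := Submodule.span ℂ {x : K | ∃ a' b' : H, x = tp a' b'} with hS
  have hSdense : Dense (S : Set K) :=
    Submodule.dense_iff_topologicalClosure_eq_top.mpr hdense
  have hwt := W_zpow_tp_aux V tp W hW
  -- commuting powers
  have hVcomm : ∀ (i : ℤ) (x : H), (V ^ (i + 1)) x = V ((V ^ i) x) := by
    intro i x
    have e1 : V ^ (i + 1) = V * V ^ i := by rw [add_comm, zpow_add]; simp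
    rw [e1]; rfl
  have part1 : ∀ C : Submodule ℂ K, IsClosed (C : Set K) →
      (∀ x ∈ C, W x ∈ C) → (∀ x ∈ C, W.symm x ∈ C) →
      tp h h ∈ C → tp h (V h) ∈ C → C = ⊤ := by
    intro C hCcl hCW hCW' hm00 hm01
    have hzmem := zpow_mem_aux W C hCW hCW'
    have smul_cancel : ∀ (c : ℂ), c ≠ 0 → ∀ x : K, c • x ∈ C → x ∈ C := by
      intro c hc x hx
      have h2 := C.smul_mem c⁻¹ hx
      rwa [smul_smul, inv_mul_cancel₀ hc, one_smul] at h2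
    have memW : ∀ (f g : H), tp f g ∈ C → tp (V f) (V g) ∈ C := by
      intro f g hf; rw [← hW]; exact hCW _ hf
    -- the key weak-limit step
    have key : ∀ f g : H, tp f g ∈ C →
        ((starRingEnd ℂ) (a*a)) • tp f g + ((starRingEnd ℂ) (a*b)) • tp f (V g)
        + ((starRingEnd ℂ) (b*a)) • tp (V f) g
        + ((starRingEnd ℂ) (b*b)) • tp (V f) (V g) ∈ C := by
      intro f g hfg
      set L : K := ((starRingEnd ℂ) (a*a)) • tp f g + ((starRingEnd ℂ) (a*b)) • tp f (V g)
        + ((starRingEnd ℂ) (b*a)) • tp (V f) g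
        + ((starRingEnd ℂ) (b*b)) • tp (V f) (V g) with hL
      set u : ℕ → K := fun k => (W ^ n k) (tp f g) with hu
      have humem : ∀ k, u k ∈ C := fun k => hzmem (n k) _ hfg
      have hubound : ∀ k, ‖u k‖ ≤ ‖tp f g‖ := fun k => le_of_eq ((W ^ n k).norm_map _)
      have htendS : ∀ g' ∈ S, Tendsto (fun k => (⟪u k, g'⟫_ℂ)) atTop (𝓝 ⟪L, g'⟫_ℂ) := by
        intro g' hg'
        induction hg' using Submodule.span_induction with
        | mem x hx =>
          obtain ⟨c, d, rfl⟩ := hx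
          have hval : (fun k => (⟪u k, tp c d⟫_ℂ)) =
              fun k => (⟪(V ^ n k) f, c⟫_ℂ) * (⟪(V ^ n k) g, d⟫_ℂ) := by
            funext k
            rw [hu]
            simp only
            rw [hwt, hinner]
          have hLval : (⟪L, tp c d⟫_ℂ) =
              (a * ⟪f, c⟫_ℂ + b * ⟪V f, c⟫_ℂ) * (a * ⟪g, d⟫_ℂ + b * ⟪V g, d⟫_ℂ) := by
            rw [hL]
            simp only [inner_add_left, inner_smul_left, hinner]
            simp only [map_mul, RingHomCompTriple.comp_apply, RingHom.id_apply,
              starRingEnd_self_apply]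
            ring
          rw [hval, hLval]
          exact (hwcp f c).mul (hwcp g d)
        | zero => simp only [inner_zero_right]; exact tendsto_const_nhds
        | add x y hx hy ihx ihy =>
          simp only [inner_add_right]
          exact ihx.add ihy
        | smul c x hx ihx =>
          simp only [inner_smul_right]
          exact ihx.const_mul _
      have htend := dense_ext_aux S hSdense u L (‖tp f g‖) hubound htendS
      exact weakLimit_mem_aux C hCcl u L humem htend
    -- extract the second / third term
    have extract2 : ∀ f g : H, tp f g ∈ C → tp (V f) g ∈ C → tp (V f) (V g) ∈ C →
        tp f (V g) ∈ C := by
      intro f g h1 h2 h3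
      have hk := key f g h1
      have e : ((starRingEnd ℂ) (a*b)) • tp f (V g) =
          (((starRingEnd ℂ) (a*a)) • tp f g + ((starRingEnd ℂ) (a*b)) • tp f (V g)
          + ((starRingEnd ℂ) (b*a)) • tp (V f) g
          + ((starRingEnd ℂ) (b*b)) • tp (V f) (V g))
          - ((starRingEnd ℂ) (a*a)) • tp f g - ((starRingEnd ℂ) (b*a)) • tp (V f) g
          - ((starRingEnd ℂ) (b*b)) • tp (V f) (V g) := by abel
      have hmem : ((starRingEnd ℂ) (a*b)) • tp f (V g) ∈ C := by
        rw [e]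
        exact C.sub_mem (C.sub_mem (C.sub_mem hk (C.smul_mem _ h1)) (C.smul_mem _ h2))
          (C.smul_mem _ h3)
      exact smul_cancel _ (star_ne_zero.mpr (mul_ne_zero ha hb)) _ hmem
    have extract3 : ∀ f g : H, tp f g ∈ C → tp f (V g) ∈ C → tp (V f) (V g) ∈ C →
        tp (V f) g ∈ C := by
      intro f g h1 h2 h3
      have hk := key f g h1
      have e : ((starRingEnd ℂ) (b*a)) • tp (V f) g =
          (((starRingEnd ℂ) (a*a)) • tp f g + ((starRingEnd ℂ) (a*b)) • tp f (V g)
          + ((starRingEnd ℂ) (b*a)) • tp (V f) g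
          + ((starRingEnd ℂ) (b*b)) • tp (V f) (V g))
          - ((starRingEnd ℂ) (a*a)) • tp f g - ((starRingEnd ℂ) (a*b)) • tp f (V g)
          - ((starRingEnd ℂ) (b*b)) • tp (V f) (V g) := by abel
      have hmem : ((starRingEnd ℂ) (b*a)) • tp (V f) g ∈ C := by
        rw [e]
        exact C.sub_mem (C.sub_mem (C.sub_mem hk (C.smul_mem _ h1)) (C.smul_mem _ h2))
          (C.smul_mem _ h3)
      exact smul_cancel _ (star_ne_zero.mpr (mul_ne_zero hb ha)) _ hmem
    have m10 : tp (V h) h ∈ C := extract3 h h hm00 hm01 (memW h h hm00)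
    -- chains
    have chain1 : ∀ m : ℕ, tp h ((V ^ (m : ℤ)) h) ∈ C ∧ tp h ((V ^ ((m : ℤ) + 1)) h) ∈ C := by
      intro m
      induction m with
      | zero =>
        constructor
        · simpa using hm00
        · have e : ((V ^ (((0:ℕ) : ℤ) + 1)) h) = V h := by norm_num
          rw [e]; exact hm01
      | succ m ih =>
        have hcast : ((m + 1 : ℕ) : ℤ) = (m : ℤ) + 1 := by push_cast; ring
        refine ⟨by rw [hcast]; exact ih.2, ?_⟩
        rw [hcast]
        -- goal: tp h (V ^ ((m:ℤ)+1+1) h) ∈ C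
        have hVg : (V ^ ((m : ℤ) + 1 + 1)) h = V ((V ^ ((m : ℤ) + 1)) h) := hVcomm _ h
        rw [hVg]
        apply extract2 h ((V ^ ((m : ℤ) + 1)) h) ih.2
        · have := memW h ((V ^ (m : ℤ)) h) ih.1
          rwa [← hVcomm] at this
        · exact memW h _ ih.2
    have chain2 : ∀ m : ℕ, tp ((V ^ (m : ℤ)) h) h ∈ C ∧ tp ((V ^ ((m : ℤ) + 1)) h) h ∈ C := by
      intro m
      induction m with
      | zero =>
        constructor
        · simpa using hm00
        · have e : ((V ^ (((0:ℕ) : ℤ) + 1)) h) = V h := by norm_num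
          rw [e]; exact m10
      | succ m ih =>
        have hcast : ((m + 1 : ℕ) : ℤ) = (m : ℤ) + 1 := by push_cast; ring
        refine ⟨by rw [hcast]; exact ih.2, ?_⟩
        rw [hcast]
        have hVg : (V ^ ((m : ℤ) + 1 + 1)) h = V ((V ^ ((m : ℤ) + 1)) h) := hVcomm _ h
        rw [hVg]
        apply extract3 ((V ^ ((m : ℤ) + 1)) h) h ih.2
        · have := memW ((V ^ (m : ℤ)) h) h ih.1
          rwa [← hVcomm] at this
        · exact memW _ h ih.2
    have allij : ∀ i j : ℤ, tp ((V ^ i) h) ((V ^ j) h) ∈ C := by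
      intro i j
      rcases le_total i j with hij | hij
      · obtain ⟨m, hm⟩ : ∃ m : ℕ, j - i = (m : ℤ) :=
          ⟨(j - i).toNat, (Int.toNat_of_nonneg (by omega)).symm⟩
        have h1 : tp h ((V ^ (m : ℤ)) h) ∈ C := (chain1 m).1
        have h2 := hzmem i _ h1
        rw [hwt] at h2
        have e0 : (V ^ (i + (m : ℤ))) h = (V ^ i) ((V ^ (m : ℤ)) h) := by
          rw [zpow_add]; rfl
        have e1 : i + (m : ℤ) = j := by omega
        rw [e1] at e0
        rw [← e0] at h2
        exact h2
      · obtain ⟨m, hm⟩ : ∃ m : ℕ, i - j = (m : ℤ) :=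
          ⟨(i - j).toNat, (Int.toNat_of_nonneg (by omega)).symm⟩
        have h1 : tp ((V ^ (m : ℤ)) h) h ∈ C := (chain2 m).1
        have h2 := hzmem j _ h1
        rw [hwt] at h2
        have e0 : (V ^ (j + (m : ℤ))) h = (V ^ j) ((V ^ (m : ℤ)) h) := by
          rw [zpow_add]; rfl
        have e1 : j + (m : ℤ) = i := by omega
        rw [e1] at e0
        rw [← e0] at h2
        exact h2
    -- density step
    set T : Submodule ℂ H := Submodule.span ℂ (Set.range fun i : ℤ => (V ^ i) h) with hT
    have hTdense : Dense (T : Set H) := by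
      apply Submodule.dense_iff_topologicalClosure_eq_top.mpr
      exact hcyc
    have stepTT : ∀ c ∈ T, ∀ d ∈ T, tp c d ∈ C := by
      intro c hc
      induction hc using Submodule.span_induction with
      | mem x hx =>
        obtain ⟨i, rfl⟩ := hx
        intro d hd
        induction hd using Submodule.span_induction with
        | mem y hy => obtain ⟨j, rfl⟩ := hy; exact allij i j
        | zero => simp only [map_zero]; exact C.zero_mem
        | add y z hy hz ihy ihz => simp only [map_add]; exact C.add_mem ihy ihz
        | smul r y hy ihy => simp only [map_smul]; exact C.smul_mem r ihy
      | zero => intro d hd; simp only [map_zero, LinearMap.zero_apply]; exact C.zero_mem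
      | add x y hx hy ihx ihy =>
        intro d hd
        simp only [map_add, LinearMap.add_apply]
        exact C.add_mem (ihx d hd) (ihy d hd)
      | smul r x hx ihx =>
        intro d hd
        simp only [map_smul, LinearMap.smul_apply]
        exact C.smul_mem r (ihx d hd)
    have stepT_all : ∀ d ∈ T, ∀ c : H, tp c d ∈ C := by
      intro d hd c
      have hcont : Continuous fun x : H => tp x d := by
        have := (LinearMap.mkContinuous (tp.flip d) ‖d‖ (fun x => by
          rw [LinearMap.flip_apply, tp_norm_aux tp hinner]
          exact le_of_eq (mul_comm _ _))).continuous
        exact this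
      have hclosed : IsClosed {x : H | tp x d ∈ C} := hCcl.preimage hcont
      have hsub : (T : Set H) ⊆ {x : H | tp x d ∈ C} := fun c' hc' => stepTT c' hc' d hd
      have : closure (T : Set H) ⊆ {x : H | tp x d ∈ C} := closure_minimal hsub hclosed
      exact this (hTdense c)
    have step_all : ∀ c d : H, tp c d ∈ C := by
      intro c d
      have hcont : Continuous fun y : H => tp c y := by
        exact (LinearMap.mkContinuous (tp c) ‖c‖ (fun y => by
          rw [tp_norm_aux tp hinner])).continuous
      have hclosed : IsClosed {y : H | tp c y ∈ C} := hCcl.preimage hcont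
      have hsub : (T : Set H) ⊆ {y : H | tp c y ∈ C} := fun d' hd' => stepT_all d' hd' c
      have : closure (T : Set H) ⊆ {y : H | tp c y ∈ C} := closure_minimal hsub hclosed
      exact this (hTdense d)
    -- conclude
    have hSC : S ≤ C := by
      apply Submodule.span_le.mpr
      rintro x ⟨a', b', rfl⟩
      exact step_all a' b'
    have hfinal : S.topologicalClosure ≤ C := S.topologicalClosure_minimal hSC hCcl
    rw [hdense] at hfinal
    exact le_antisymm le_top hfinal
  refine ⟨part1, tp h h, tp h (V h), ?_⟩
  set A : Submodule ℂ K := cyclicSubspace W (tp h h) with hA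
  set B : Submodule ℂ K := cyclicSubspace W (tp h (V h)) with hB
  have spanInvW : ∀ f : K, ∀ x ∈ Submodule.span ℂ (Set.range fun m : ℤ => (W ^ m) f),
      W x ∈ Submodule.span ℂ (Set.range fun m : ℤ => (W ^ m) f) := by
    intro f x hx
    induction hx using Submodule.span_induction with
    | mem y hy =>
      obtain ⟨m, rfl⟩ := hy
      apply Submodule.subset_span
      refine ⟨m + 1, ?_⟩
      show (W ^ (m + 1)) f = W ((W ^ m) f)
      have e : W ^ (m + 1) = W * W ^ m := by rw [add_comm, zpow_add]; simp
      rw [e]; rfl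
    | zero => simp only [map_zero]; exact Submodule.zero_mem _
    | add y z hy hz ihy ihz => simp only [map_add]; exact Submodule.add_mem _ ihy ihz
    | smul r y hy ihy => simp only [map_smul]; exact Submodule.smul_mem _ r ihy
  have spanInvW' : ∀ f : K, ∀ x ∈ Submodule.span ℂ (Set.range fun m : ℤ => (W ^ m) f),
      W.symm x ∈ Submodule.span ℂ (Set.range fun m : ℤ => (W ^ m) f) := by
    intro f x hx
    induction hx using Submodule.span_induction with
    | mem y hy =>
      obtain ⟨m, rfl⟩ := hy
      apply Submodule.subset_span
      refine ⟨m - 1, ?_⟩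
      show (W ^ (m - 1)) f = W.symm ((W ^ m) f)
      have e : W ^ (m - 1) = W⁻¹ * W ^ m := by
        rw [sub_eq_add_neg, add_comm, zpow_add]; simp
      rw [e]; rfl
    | zero => simp only [map_zero]; exact Submodule.zero_mem _
    | add y z hy hz ihy ihz => simp only [map_add]; exact Submodule.add_mem _ ihy ihz
    | smul r y hy ihy => simp only [map_smul]; exact Submodule.smul_mem _ r ihy
  have hAinv : ∀ x ∈ A, W x ∈ A := inv_closure_aux W _ (spanInvW (tp h h))
  have hAinv' : ∀ x ∈ A, W.symm x ∈ A := inv_closure_aux W.symm _ (spanInvW' (tp h h))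
  have hBinv : ∀ x ∈ B, W x ∈ B := inv_closure_aux W _ (spanInvW (tp h (V h)))
  have hBinv' : ∀ x ∈ B, W.symm x ∈ B := inv_closure_aux W.symm _ (spanInvW' (tp h (V h)))
  have hsupInv : ∀ x ∈ A ⊔ B, W x ∈ A ⊔ B := by
    intro x hx
    obtain ⟨y, hy, z, hz, rfl⟩ := Submodule.mem_sup.mp hx
    rw [map_add]
    exact Submodule.add_mem _ (Submodule.mem_sup_left (hAinv y hy))
      (Submodule.mem_sup_right (hBinv z hz))
  have hsupInv' : ∀ x ∈ A ⊔ B, W.symm x ∈ A ⊔ B := by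
    intro x hx
    obtain ⟨y, hy, z, hz, rfl⟩ := Submodule.mem_sup.mp hx
    rw [map_add]
    exact Submodule.add_mem _ (Submodule.mem_sup_left (hAinv' y hy))
      (Submodule.mem_sup_right (hBinv' z hz))
  have hCinv := inv_closure_aux W (A ⊔ B) hsupInv
  have hCinv' := inv_closure_aux W.symm (A ⊔ B) hsupInv'
  have hmemA : tp h h ∈ A := by
    rw [hA]
    apply Submodule.le_topologicalClosure
    apply Submodule.subset_span
    exact ⟨0, by simp⟩
  have hmemB : tp h (V h) ∈ B := by
    rw [hB]
    apply Submodule.le_topologicalClosure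
    apply Submodule.subset_span
    exact ⟨0, by simp⟩
  exact part1 ((A ⊔ B).topologicalClosure) (Submodule.isClosed_topologicalClosure _)
    hCinv hCinv'
    (Submodule.le_topologicalClosure _ (Submodule.mem_sup_left hmemA))
    (Submodule.le_topologicalClosure _ (Submodule.mem_sup_right hmemB))
end

section
/- Let σ be a continuous symmetric-under-flip measure situation: if σ is a continuous probability measure on the circle 𝕋, then for the convolution square σ*², in the disintegration of σ×σ over the multiplication map (z₁,z₂) ↦ z₁z₂, almost every fiber measure σ_z is invariant under the flip (z₁,z₂) ↦ (z₂,z₁), and hence if σ_z is not continuous then its number of atoms is even. -/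
open MeasureTheory ProbabilityTheory

private lemma even_aux {α : Type*} (f : α → α) :
    ∀ n : ℕ, ∀ S : Set α, S.Finite → S.ncard = n →
      (∀ a ∈ S, f a ∈ S) → (∀ a ∈ S, f (f a) = a) → (∀ a ∈ S, f a ≠ a) →
      Even S.ncard := by
  intro n
  induction n using Nat.strong_induction_on with
  | _ n ih =>
    intro S hS hn hmap hinv hne
    rcases S.eq_empty_or_nonempty with rfl | ⟨a, ha⟩
    · simp
    have hfa : f a ∈ S := hmap a ha
    have hane : a ≠ f a := fun h => hne a ha h.symm
    have hsub : ({a, f a} : Set α) ⊆ S := by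
      intro x hx
      rcases hx with rfl | hx
      · exact ha
      · rw [Set.mem_singleton_iff] at hx; exact hx ▸ hfa
    have hpair : ({a, f a} : Set α).ncard = 2 := Set.ncard_pair hane
    have hdiff : (S \ {a, f a}).ncard + 2 = S.ncard := by
      rw [← hpair]; exact Set.ncard_diff_add_ncard_of_subset hsub hS
    have hS' : (S \ {a, f a}).Finite := hS.subset Set.diff_subset
    have hmap' : ∀ b ∈ S \ ({a, f a} : Set α), f b ∈ S \ ({a, f a} : Set α) := by
      rintro b ⟨hbS, hb⟩
      simp only [Set.mem_insert_iff, Set.mem_singleton_iff, not_or] at hb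
      refine ⟨hmap b hbS, ?_⟩
      simp only [Set.mem_insert_iff, Set.mem_singleton_iff, not_or]
      constructor
      · intro h
        exact hb.2 (by rw [← hinv b hbS, h])
      · intro h
        exact hb.1 (by rw [← hinv b hbS, h, hinv a ha])
    have heven : Even (S \ ({a, f a} : Set α)).ncard :=
      ih (S \ ({a, f a} : Set α)).ncard (by omega) _ hS' rfl hmap'
        (fun b hb => hinv b hb.1) (fun b hb => hne b hb.1)
    rw [← hdiff]
    exact heven.add even_two

private lemma even_ncard_of_involution {α : Type*} (f : α → α) (S : Set α) (hS : S.Finite)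
    (hmap : ∀ a ∈ S, f a ∈ S) (hinv : ∀ a ∈ S, f (f a) = a) (hne : ∀ a ∈ S, f a ≠ a) :
    Even S.ncard :=
  even_aux f S.ncard S hS rfl hmap hinv hne

private lemma kernel_eq_condKernel (σ : Measure Circle) [IsProbabilityMeasure σ]
    (κ : Kernel Circle (Circle × Circle)) [IsMarkovKernel κ]
    (hdis : ∀ s : Set (Circle × Circle), MeasurableSet s →
      (σ.prod σ) s = ∫⁻ z, κ z s ∂((σ.prod σ).map (fun p : Circle × Circle => p.1 * p.2)))
    (hfiber : ∀ᵐ z ∂((σ.prod σ).map (fun p : Circle × Circle => p.1 * p.2)),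
      κ z {p : Circle × Circle | p.1 * p.2 = z}ᶜ = 0) :
    ∀ᵐ z ∂((σ.prod σ).map (fun p : Circle × Circle => p.1 * p.2)),
      κ z = ((σ.prod σ).map
        (fun p : Circle × Circle => (p.1 * p.2, p))).condKernel z := by
  have hmmeas : Measurable (fun p : Circle × Circle => p.1 * p.2) :=
    measurable_fst.mul measurable_snd
  set ν := (σ.prod σ).map (fun p : Circle × Circle => p.1 * p.2) with hν
  set ρ := (σ.prod σ).map (fun p : Circle × Circle => (p.1 * p.2, p)) with hρ
  have hg : Measurable (fun p : Circle × Circle => (p.1 * p.2, p)) :=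
    hmmeas.prodMk measurable_id
  have hρprob : IsProbabilityMeasure ρ := Measure.isProbabilityMeasure_map hg.aemeasurable
  have hfst : ρ.fst = ν := by
    rw [hρ, Measure.fst, Measure.map_map measurable_fst hg]
    rfl
  have hkey : ∀ (t : Set Circle) (u : Set (Circle × Circle)),
      MeasurableSet t → MeasurableSet u →
      (σ.prod σ) ((fun p : Circle × Circle => p.1 * p.2) ⁻¹' t ∩ u)
        = ∫⁻ z in t, κ z u ∂ν := by
    intro t u ht hu
    rw [hdis _ ((hmmeas ht).inter hu), ← lintegral_indicator ht]
    refine lintegral_congr_ae ?_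
    filter_upwards [hfiber] with z hz
    by_cases hzt : z ∈ t
    · have h1 : κ z ((fun p : Circle × Circle => p.1 * p.2) ⁻¹' t ∩ u)
          = κ z (((fun p : Circle × Circle => p.1 * p.2) ⁻¹' t ∩ u)
              ∩ {p : Circle × Circle | p.1 * p.2 = z}) :=
        (measure_inter_conull hz).symm
      have h2 : κ z u = κ z (u ∩ {p : Circle × Circle | p.1 * p.2 = z}) :=
        (measure_inter_conull hz).symm
      have hset : ((fun p : Circle × Circle => p.1 * p.2) ⁻¹' t ∩ u)
          ∩ {p : Circle × Circle | p.1 * p.2 = z}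
          = u ∩ {p : Circle × Circle | p.1 * p.2 = z} := by
        ext p
        simp only [Set.mem_inter_iff, Set.mem_preimage, Set.mem_setOf_eq]
        constructor
        · rintro ⟨⟨_, hpu⟩, hpz⟩; exact ⟨hpu, hpz⟩
        · rintro ⟨hpu, hpz⟩; exact ⟨⟨hpz ▸ hzt, hpu⟩, hpz⟩
      rw [h1, hset, Set.indicator_of_mem hzt, h2]
    · have hset : ((fun p : Circle × Circle => p.1 * p.2) ⁻¹' t ∩ u)
          ∩ {p : Circle × Circle | p.1 * p.2 = z} = ∅ := by
        ext p
        simp only [Set.mem_inter_iff, Set.mem_preimage, Set.mem_setOf_eq,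
          Set.mem_empty_iff_false, iff_false, not_and]
        rintro ⟨hpt, _⟩ hpz
        exact hzt (hpz ▸ hpt)
      have h0 : κ z ((fun p : Circle × Circle => p.1 * p.2) ⁻¹' t ∩ u) = 0 := by
        rw [← measure_inter_conull hz, hset, measure_empty]
      rw [h0, Set.indicator_of_notMem hzt]
  have hcomp : ρ = ρ.fst ⊗ₘ κ := by
    rw [hfst]
    refine ext_of_generate_finite _ generateFrom_prod.symm isPiSystem_prod ?_ ?_
    · rintro s ⟨t, ht, u, hu, rfl⟩
      simp only [Set.mem_setOf_eq] at ht hu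
      rw [Measure.compProd_apply_prod ht hu, hρ, Measure.map_apply hg (ht.prod hu)]
      have hpre : (fun p : Circle × Circle => (p.1 * p.2, p)) ⁻¹' (t ×ˢ u)
          = (fun p : Circle × Circle => p.1 * p.2) ⁻¹' t ∩ u := by
        ext p
        simp [Set.mem_prod]
      rw [hpre, hkey t u ht hu]
    · have : IsProbabilityMeasure (ν ⊗ₘ κ) := by
        have : IsProbabilityMeasure ν := Measure.isProbabilityMeasure_map hmmeas.aemeasurable
        infer_instance
      simp [measure_univ]
  have := eq_condKernel_of_measure_eq_compProd κ hcomp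
  rwa [hfst] at this

/- STATEMENT 8: let `σ` be a continuous (non-atomic) probability measure on the
circle `𝕋`, and let `σ×σ = ∫ σ_z d(σ*²)(z)` be a disintegration of `σ×σ` with
respect to the multiplication map `m(z₁,z₂) = z₁z₂`, where `σ*²` is the
pushforward of `σ×σ` under `m` (the convolution square).  Then for `σ*²`-almost
every `z`, the fiber measure `σ_z` is invariant under the flip
`(z₁,z₂) ↦ (z₂,z₁)`; hence if `σ_z` is not continuous and has finitely many
atoms, their number is even. -/
theorem stmt8 (σ : Measure Circle) [IsProbabilityMeasure σ]
    (hcont : ∀ z : Circle, σ {z} = 0)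
    (κ : Kernel Circle (Circle × Circle)) [IsMarkovKernel κ]
    -- `κ` disintegrates `σ × σ` over the convolution square `(σ×σ).map m`:
    (hdis : ∀ s : Set (Circle × Circle), MeasurableSet s →
      (σ.prod σ) s = ∫⁻ z, κ z s ∂((σ.prod σ).map (fun p : Circle × Circle => p.1 * p.2)))
    -- almost every fiber measure is concentrated on the corresponding fiber of `m`:
    (hfiber : ∀ᵐ z ∂((σ.prod σ).map (fun p : Circle × Circle => p.1 * p.2)),
      κ z {p : Circle × Circle | p.1 * p.2 = z}ᶜ = 0) :
    ∀ᵐ z ∂((σ.prod σ).map (fun p : Circle × Circle => p.1 * p.2)),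
      (κ z).map (fun p : Circle × Circle => (p.2, p.1)) = κ z ∧
      (∀ hfin : {p : Circle × Circle | κ z {p} ≠ 0}.Finite,
        Even {p : Circle × Circle | κ z {p} ≠ 0}.ncard) := by
  classical
  set ν := (σ.prod σ).map (fun p : Circle × Circle => p.1 * p.2) with hν
  have hmmeas : Measurable (fun p : Circle × Circle => p.1 * p.2) :=
    measurable_fst.mul measurable_snd
  have hswap : Measurable (fun p : Circle × Circle => (p.2, p.1)) :=
    measurable_snd.prodMk measurable_fst
  set κ' := Kernel.map κ (fun p : Circle × Circle => (p.2, p.1)) with hκ'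
  have hκ'M : IsMarkovKernel κ' := Kernel.IsMarkovKernel.map κ hswap
  -- the flipped kernel also disintegrates `σ × σ`
  have hdis' : ∀ s : Set (Circle × Circle), MeasurableSet s →
      (σ.prod σ) s = ∫⁻ z, κ' z s ∂ν := by
    intro s hs
    have hswap_inv : (σ.prod σ) s
        = (σ.prod σ) ((fun p : Circle × Circle => (p.2, p.1)) ⁻¹' s) := by
      conv_lhs => rw [← Measure.prod_swap (μ := σ) (ν := σ)]
      rw [Measure.map_apply measurable_swap hs]
      rfl
    rw [hswap_inv, hdis _ (hswap hs)]
    refine lintegral_congr fun z => ?_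
    rw [hκ', Kernel.map_apply' κ hswap z hs]
  have hfiber' : ∀ᵐ z ∂ν, κ' z {p : Circle × Circle | p.1 * p.2 = z}ᶜ = 0 := by
    filter_upwards [hfiber] with z hz
    have hms : MeasurableSet ({p : Circle × Circle | p.1 * p.2 = z}ᶜ) :=
      (hmmeas (measurableSet_singleton z)).compl
    rw [hκ', Kernel.map_apply' κ hswap z hms]
    have hset : (fun p : Circle × Circle => (p.2, p.1)) ⁻¹'
        ({p : Circle × Circle | p.1 * p.2 = z}ᶜ)
        = {p : Circle × Circle | p.1 * p.2 = z}ᶜ := by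
      ext p
      simp [mul_comm]
    rw [hset]
    exact hz
  have h1 := kernel_eq_condKernel σ κ hdis hfiber
  have h2 := kernel_eq_condKernel σ κ' hdis' hfiber'
  -- a.e. the fiber measure gives no mass to the diagonal
  have hdiagmeas : MeasurableSet (Set.diagonal Circle) :=
    isClosed_diagonal.measurableSet
  have hdiag0 : (σ.prod σ) (Set.diagonal Circle) = 0 := by
    rw [Measure.prod_apply hdiagmeas]
    have : ∀ x : Circle, σ (Prod.mk x ⁻¹' Set.diagonal Circle) = 0 := by
      intro x
      have : Prod.mk x ⁻¹' Set.diagonal Circle = {x} := by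
        ext y
        simp [Set.diagonal, eq_comm]
      rw [this]
      exact hcont x
    simp [this]
  have hdiag : ∀ᵐ z ∂ν, κ z (Set.diagonal Circle) = 0 := by
    rw [hdis _ hdiagmeas] at hdiag0
    exact (lintegral_eq_zero_iff (κ.measurable_coe hdiagmeas)).mp hdiag0
  filter_upwards [h1, h2, hdiag] with z hz1 hz2 hzd
  have hflip : (κ z).map (fun p : Circle × Circle => (p.2, p.1)) = κ z := by
    have hk : κ' z = κ z := hz2.trans hz1.symm
    have hmapeq : (κ z).map (fun p : Circle × Circle => (p.2, p.1)) = κ' z :=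
      (Kernel.map_apply κ hswap z).symm
    rw [hmapeq, hk]
  refine ⟨hflip, fun hfin => ?_⟩
  have hatom : ∀ p : Circle × Circle, κ z {(p.2, p.1)} = κ z {p} := by
    intro p
    conv_rhs => rw [← hflip]
    rw [Measure.map_apply hswap (measurableSet_singleton p)]
    congr 1
    ext q
    simp only [Set.mem_preimage, Set.mem_singleton_iff, Prod.ext_iff]
    tauto
  refine even_ncard_of_involution (fun p : Circle × Circle => (p.2, p.1)) _ hfin ?_ ?_ ?_
  · intro p hp
    simp only [Set.mem_setOf_eq] at hp ⊢
    rwa [hatom p]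
  · intro p _
    rfl
  · intro p hp h
    simp only [Set.mem_setOf_eq] at hp
    have hpd : p ∈ Set.diagonal Circle := by
      have : p.2 = p.1 := congrArg Prod.fst h
      exact this.symm
    exact hp (measure_mono_null (Set.singleton_subset_iff.mpr hpd) hzd)
end
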